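/- Let Ω(μ,b) = ℂ[t] be the Virasoro module with action L_i(t^j) = μ^i(t − ib)(t − i)^j and C acting as zero, where μ ∈ ℂ*, b ∈ ℂ. Suppose (Ω(μ,b),δ) is a 1-differential module over (Vir, d_{n,a}) with δ ≠ −id. Then aμ^{n−1} = 1 and there exists ξ ∈ ℂ such that δ(t^j) = ξ(t/n)^j − t^j for all j ∈ ℤ_{≥0}. Conversely, if aμ^{n−1} = 1, any δ of this form gives a 1-differential module structure. -/

import Mathlib

/-- The defining bracket relations of the Virasoro algebra on a family `L : ℤ → V`
and a central element `C`. -/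
def VirRel {V : Type*} [LieRing V] [LieAlgebra ℂ V] (L : ℤ → V) (C : V) : Prop :=
  (∀ m n : ℤ, ⁅L m, L n⁆ = ((n : ℂ) - (m : ℂ)) • L (m + n)
      + (if m + n = 0 then ((m : ℂ) ^ 3 - (m : ℂ)) / 12 else 0) • C) ∧
  ∀ m : ℤ, ⁅C, L m⁆ = 0

/-- `f` has the values of `φ_n ∘ τ_a` on the basis:
`f(L_i) = (a^i/n)(L_{ni} - δ_{i,0}((n²-1)/24)C)` and `f(C) = nC`. -/
def PhiTau {V : Type*} [LieRing V] [LieAlgebra ℂ V] (L : ℤ → V) (C : V)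
    (n : ℤ) (a : ℂ) (f : V →ₗ[ℂ] V) : Prop :=
  (∀ i : ℤ, f (L i) = (a ^ i / (n : ℂ)) •
      (L (n * i) - (if i = 0 then ((n : ℂ) ^ 2 - 1) / 24 else 0) • C)) ∧
  f C = (n : ℂ) • C


open Polynomial Finset

namespace Stmt15Aux

lemma Dexp (D : ℂ[X] →ₗ[ℂ] ℂ[X]) (N : ℕ) (p : ℂ[X]) (h : p.natDegree < N) :
    D p = ∑ k ∈ Finset.range N, p.coeff k • D ((X : ℂ[X]) ^ k) := by
  conv_lhs => rw [p.as_sum_range' N h]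
  rw [map_sum]
  exact Finset.sum_congr rfl fun k _ => by rw [← smul_X_eq_monomial, map_smul]

lemma compexp (u : ℂ) (N : ℕ) (p : ℂ[X]) (h : p.natDegree < N) :
    p.comp (C u * X) = ∑ k ∈ Finset.range N, p.coeff k • (u ^ k • (X : ℂ[X]) ^ k) := by
  conv_lhs => rw [p.as_sum_range' N h]
  rw [Polynomial.sum_comp]
  refine Finset.sum_congr rfl fun k _ => ?_
  rw [← smul_X_eq_monomial, smul_comp, X_pow_comp, mul_pow, ← C_pow, ← smul_eq_C_mul]

lemma compScale (ν : ℂ) (hν : ν ≠ 0) (α β : ℂ) (j : ℕ) :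
    ((X - C α) * (X - C β) ^ j).comp (C ν⁻¹ * X)
      = (ν⁻¹) ^ (j + 1) • ((X - C (ν * α)) * ((X : ℂ[X]) - C (ν * β)) ^ j) := by
  have h1 : ∀ γ : ℂ, ((X : ℂ[X]) - C γ).comp (C ν⁻¹ * X) = C ν⁻¹ * (X - C (ν * γ)) := by
    intro γ
    rw [sub_comp, X_comp, C_comp, mul_sub, ← C_mul, inv_mul_cancel_left₀ hν]
  rw [mul_comp, pow_comp, h1, h1, mul_pow, smul_eq_C_mul, map_pow]
  ring

end Stmt15Aux

open Polynomial in
/-- 1-differential module structures on `Ω(μ,b) = ℂ[t]` with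
`L_i(t^j) = μ^i (t-ib)(t-i)^j` over `(Vir, d_{n,a})`: a nontrivial such structure
forces `aμ^{n-1} = 1` and `δ(t^j) = ξ(t/n)^j - t^j`; conversely if `aμ^{n-1} = 1`
every such `δ` is a 1-differential module structure. -/
theorem stmt_15 {V : Type*} [LieRing V] [LieAlgebra ℂ V]
    (L : ℤ → V) (C : V)
    (bb : Module.Basis (Option ℤ) ℂ V) (hbL : ∀ i : ℤ, bb (some i) = L i)
    (hbC : bb none = C) (hrel : VirRel L C)
    [LieRingModule V ℂ[X]] [LieModule ℂ V ℂ[X]]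
    (μ b : ℂ) (hμ : μ ≠ 0)
    (hact : ∀ (i : ℤ) (j : ℕ),
      ⁅L i, (X : ℂ[X]) ^ j⁆ = μ ^ i • ((X - Polynomial.C ((i : ℂ) * b)) *
        (X - Polynomial.C (i : ℂ)) ^ j))
    (hactC : ∀ p : ℂ[X], ⁅C, p⁆ = 0)
    (n : ℤ) (hn : n ≠ 0) (a : ℂ) (ha : a ≠ 0)
    (f : V →ₗ[ℂ] V) (hf : PhiTau L C n a f) :
    (∀ δ : ℂ[X] →ₗ[ℂ] ℂ[X], δ ≠ -(LinearMap.id : ℂ[X] →ₗ[ℂ] ℂ[X]) →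
      (∀ (x : V) (p : ℂ[X]),
        δ ⁅x, p⁆ = ⁅f x - x, p⁆ + ⁅x, δ p⁆ + ⁅f x - x, δ p⁆) →
      (a * μ ^ (n - 1) = 1 ∧
        ∃ ξ : ℂ, ∀ j : ℕ, δ ((X : ℂ[X]) ^ j) =
          (ξ / (n : ℂ) ^ j) • (X : ℂ[X]) ^ j - (X : ℂ[X]) ^ j)) ∧
    (a * μ ^ (n - 1) = 1 →
      ∀ (ξ : ℂ) (δ : ℂ[X] →ₗ[ℂ] ℂ[X]),
        (∀ j : ℕ, δ ((X : ℂ[X]) ^ j) =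
          (ξ / (n : ℂ) ^ j) • (X : ℂ[X]) ^ j - (X : ℂ[X]) ^ j) →
        ∀ (x : V) (p : ℂ[X]),
          δ ⁅x, p⁆ = ⁅f x - x, p⁆ + ⁅x, δ p⁆ + ⁅f x - x, δ p⁆) := by
  have hnC : (n : ℂ) ≠ 0 := Int.cast_ne_zero.2 hn
  -- bracket with a general polynomial
  have hbr : ∀ (m : ℤ) (p : ℂ[X]),
      ⁅L m, p⁆ = μ ^ m • ((X - Polynomial.C ((m : ℂ) * b)) * p.comp (X - Polynomial.C (m : ℂ))) := by
    intro m p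
    induction p using Polynomial.induction_on' with
    | add p q hp hq => rw [lie_add, hp, hq, add_comp, mul_add, smul_add]
    | monomial k c =>
        rw [← smul_X_eq_monomial, lie_smul, hact m k, smul_comp, X_pow_comp,
          mul_smul_comm, smul_comm]
  -- rearrangement of the defining identity
  have hiff : ∀ (δ' : ℂ[X] →ₗ[ℂ] ℂ[X]) (x : V) (p : ℂ[X]),
      (δ' ⁅x, p⁆ = ⁅f x - x, p⁆ + ⁅x, δ' p⁆ + ⁅f x - x, δ' p⁆) ↔
      (δ' ⁅x, p⁆ + ⁅x, p⁆ = ⁅f x, δ' p + p⁆) := by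
    intro δ' x p
    rw [sub_lie, sub_lie, lie_add]
    constructor <;> intro h <;> linear_combination h
  -- zpow arithmetic
  have hzp : ∀ i : ℤ, a ^ i * μ ^ (n * i) = (a * μ ^ (n - 1)) ^ i * μ ^ i := by
    intro i
    have h1 : n * i = (n - 1) * i + i := by ring
    rw [h1, zpow_add₀ hμ, mul_zpow, ← zpow_mul]
    ring
  constructor
  · -- forward direction
    intro δ hδne hδ
    set D : ℂ[X] →ₗ[ℂ] ℂ[X] := δ + LinearMap.id with hD
    have hkey : ∀ (x : V) (p : ℂ[X]), D ⁅x, p⁆ = ⁅f x, D p⁆ := by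
      intro x p
      have h := (hiff δ x p).1 (hδ x p)
      simpa [hD] using h
    set q : ℕ → ℂ[X] := fun j => D ((X : ℂ[X]) ^ j) with hq
    set r : ℂ := a * μ ^ (n - 1) with hr
    have hr0 : r ≠ 0 := mul_ne_zero ha (zpow_ne_zero _ hμ)
    have hE : ∀ (i : ℤ) (j : ℕ),
        D ((X - Polynomial.C ((i : ℂ) * b)) * (X - Polynomial.C (i : ℂ)) ^ j)
          = (r ^ i / n) • ((X - Polynomial.C ((n : ℂ) * (i : ℂ) * b)) *
              (q j).comp (X - Polynomial.C ((n : ℂ) * (i : ℂ)))) := by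
      intro i j
      have h1 := hkey (L i) ((X : ℂ[X]) ^ j)
      rw [hact i j, map_smul, hf.1 i, smul_lie, sub_lie, smul_lie, hactC, smul_zero,
        sub_zero, hbr (n * i)] at h1
      push_cast at h1
      have h2 := congrArg (fun z => (μ ^ i)⁻¹ • z) h1
      simp only [smul_smul, inv_mul_cancel₀ (zpow_ne_zero i hμ), one_smul] at h2
      rw [h2]
      congr 1
      have hμi : μ ^ i ≠ 0 := zpow_ne_zero i hμ
      have := hzp i
      field_simp
      linear_combination this
    have hDexp : ∀ (N : ℕ) (p : ℂ[X]), p.natDegree < N →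
        D p = ∑ k ∈ Finset.range N, p.coeff k • q k := by
      intro N p h
      exact Stmt15Aux.Dexp D N p h
    -- the auxiliary monic polynomial s and its degree facts
    have hsm : ∀ k : ℕ, ((X - Polynomial.C b) * ((X : ℂ[X]) - Polynomial.C 1) ^ k).Monic :=
      fun k => (monic_X_sub_C b).mul ((monic_X_sub_C 1).pow k)
    have hsd : ∀ k : ℕ, ((X - Polynomial.C b) * ((X : ℂ[X]) - Polynomial.C 1) ^ k).natDegree = k + 1 := by
      intro k
      rw [(monic_X_sub_C b).natDegree_mul ((monic_X_sub_C 1).pow k), natDegree_X_sub_C,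
        natDegree_pow, natDegree_X_sub_C]
      ring
    have ht : ∀ k : ℕ,
        ((X - Polynomial.C b) * ((X : ℂ[X]) - Polynomial.C 1) ^ k - X ^ (k + 1)).natDegree < k + 1 := by
      intro k
      set s : ℂ[X] := (X - Polynomial.C b) * ((X : ℂ[X]) - Polynomial.C 1) ^ k with hsdef
      by_cases h0 : s - X ^ (k + 1) = 0
      · rw [h0]; simpa using Nat.succ_pos k
      · rw [natDegree_lt_iff_degree_lt h0]
        have hdeg : s.degree = ((X : ℂ[X]) ^ (k + 1)).degree := by
          rw [degree_X_pow, Polynomial.degree_eq_natDegree (hsm k).ne_zero, hsd k]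
        have hlt := Polynomial.degree_sub_lt hdeg (hsm k).ne_zero
          (by rw [(hsm k).leadingCoeff, Polynomial.leadingCoeff_X_pow])
        rw [hdeg, degree_X_pow] at hlt
        exact hlt
    have hDne : D ≠ 0 := by
      intro h
      apply hδne
      have : δ = D - LinearMap.id := by rw [hD]; abel
      rw [this, h, zero_sub]
    have hq0 : q 0 ≠ 0 := by
      intro h0
      have hall : ∀ j, q j = 0 := by
        intro j
        induction j using Nat.strong_induction_on with
        | _ j ih =>
          match j with
          | 0 => exact h0
          | (k + 1) =>
            have e := hE 1 k
            rw [ih k (Nat.lt_succ_self k)] at e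
            simp only [zero_comp, mul_zero, smul_zero, Int.cast_one, one_mul, mul_one] at e
            have et : D ((X - Polynomial.C b) * ((X : ℂ[X]) - Polynomial.C 1) ^ k - X ^ (k + 1)) = 0 := by
              rw [hDexp (k + 1) _ (ht k)]
              exact Finset.sum_eq_zero fun m hm => by
                rw [ih m (Finset.mem_range.1 hm), smul_zero]
            have : q (k + 1) = D ((X - Polynomial.C b) * ((X : ℂ[X]) - Polynomial.C 1) ^ k)
                - D ((X - Polynomial.C b) * ((X : ℂ[X]) - Polynomial.C 1) ^ k - X ^ (k + 1)) := by
              rw [map_sub]; simp [hq]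
            rw [this, e, et, sub_zero]
      apply hDne
      apply (Polynomial.basisMonomials ℂ).ext
      intro k
      have := hall k
      simp only [hq] at this
      simp [Polynomial.coe_basisMonomials, ← smul_X_eq_monomial, this]
    -- step: q 1 in terms of q 0
    have hq1 : q 1 = ((n : ℂ))⁻¹ • ((X : ℂ[X]) * q 0) := by
      have e := hE 0 0
      simp only [Int.cast_zero, zero_mul, mul_zero, map_zero, sub_zero, pow_zero, mul_one,
        zpow_zero, comp_X, one_div] at e
      rw [hq]
      simpa [pow_one, hq] using e
    -- step: the shift equation for q 0
    have key0 : q 0 = r • (q 0).comp (X - Polynomial.C (n : ℂ)) := by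
      have e := hE 1 0
      simp only [Int.cast_one, one_mul, mul_one, pow_zero, zpow_one] at e
      have l1 : D ((X : ℂ[X]) - Polynomial.C b) = q 1 - b • q 0 := by
        rw [map_sub]
        congr 1
        · rw [hq]; norm_num
        · rw [show (Polynomial.C b : ℂ[X]) = b • ((X : ℂ[X]) ^ 0) by
            rw [pow_zero, smul_eq_C_mul, mul_one], map_smul]
      rw [l1, hq1] at e
      have l2 : (n : ℂ)⁻¹ • ((X : ℂ[X]) * q 0) - b • q 0
          = (n : ℂ)⁻¹ • ((X - Polynomial.C ((n : ℂ) * b)) * q 0) := by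
        rw [sub_mul, smul_sub]
        congr 1
        rw [← smul_eq_C_mul, smul_smul]
        congr 1
        field_simp
      rw [l2] at e
      have e2 := congrArg (fun z => (n : ℂ) • z) e
      simp only [smul_smul, mul_inv_cancel₀ hnC, one_smul] at e2
      rw [show (n : ℂ) * (r / n) = r by field_simp] at e2
      have e3 : (X - Polynomial.C ((n : ℂ) * b)) * q 0
          = (X - Polynomial.C ((n : ℂ) * b)) * (r • (q 0).comp (X - Polynomial.C (n : ℂ))) := by
        rw [e2, mul_smul_comm]
      exact mul_left_cancel₀ (X_sub_C_ne_zero _) e3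
    -- step: r = 1
    have hc0 : (q 0).leadingCoeff ≠ 0 := leadingCoeff_ne_zero.2 hq0
    have hr1 : r = 1 := by
      have h := congrArg Polynomial.leadingCoeff key0
      rw [smul_eq_C_mul, leadingCoeff_mul, leadingCoeff_C,
        leadingCoeff_comp (by rw [natDegree_X_sub_C]; exact one_ne_zero),
        (monic_X_sub_C ((n : ℂ))).leadingCoeff, one_pow, mul_one] at h
      have h2 : r * (q 0).leadingCoeff = 1 * (q 0).leadingCoeff := by linear_combination -h
      exact mul_right_cancel₀ hc0 h2
    -- step: q 0 is constant
    have hshift : q 0 = (q 0).comp (X - Polynomial.C (n : ℂ)) := by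
      nth_rewrite 1 [key0]
      rw [hr1, one_smul]
    have heval : ∀ x : ℂ, (q 0).eval x = (q 0).eval (x - n) := by
      intro x
      conv_lhs => rw [hshift]
      rw [eval_comp]
      simp
    have hiter : ∀ k : ℕ, (q 0).eval (-(k : ℂ) * n) = (q 0).eval 0 := by
      intro k
      induction k with
      | zero => simp
      | succ m ih =>
        have h2 : (-(m : ℂ) * n) - n = -((m : ℕ) + 1 : ℂ) * n := by ring
        push_cast
        rw [show (-((m : ℂ) + 1) * n) = (-(m : ℂ) * n) - n by ring, ← heval, ih]
    have hconst : q 0 = Polynomial.C ((q 0).eval 0) := by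
      have hsub : q 0 - Polynomial.C ((q 0).eval 0) = 0 := by
        apply Polynomial.eq_zero_of_infinite_isRoot
        apply Set.infinite_of_injective_forall_mem (f := fun k : ℕ => -(k : ℂ) * n)
        · intro k1 k2 h
          have h2 : -(k1 : ℂ) = -(k2 : ℂ) := mul_right_cancel₀ hnC h
          have : (k1 : ℂ) = k2 := neg_inj.mp h2
          exact_mod_cast this
        · intro k
          simp only [Set.mem_setOf_eq, Polynomial.IsRoot, eval_sub, eval_C, sub_eq_zero]
          simpa [neg_mul] using hiter k
      linear_combination hsub
    set c : ℂ := (q 0).eval 0 with hcdef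
    have hmain : ∀ j, q j = (c / (n : ℂ) ^ j) • (X : ℂ[X]) ^ j := by
      intro j
      induction j using Nat.strong_induction_on with
      | _ j ih =>
        match j with
        | 0 => simpa [smul_eq_C_mul] using hconst
        | (k + 1) =>
          have e := hE 1 k
          simp only [Int.cast_one, one_mul, mul_one, hr1, one_zpow] at e
          rw [ih k (Nat.lt_succ_self k), smul_comp, X_pow_comp] at e
          have e' : D ((X - Polynomial.C b) * ((X : ℂ[X]) - Polynomial.C 1) ^ k)
              = c • (((X - Polynomial.C b) * ((X : ℂ[X]) - Polynomial.C 1) ^ k).comp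
                  (Polynomial.C (n : ℂ)⁻¹ * X)) := by
            rw [e, Stmt15Aux.compScale (n : ℂ) hnC b 1 k, mul_one, mul_smul_comm,
              smul_smul, smul_smul]
            congr 1
            rw [one_div, div_eq_mul_inv, inv_pow, pow_succ]
            ring
          have et' : D ((X - Polynomial.C b) * ((X : ℂ[X]) - Polynomial.C 1) ^ k - X ^ (k + 1))
              = c • (((X - Polynomial.C b) * ((X : ℂ[X]) - Polynomial.C 1) ^ k
                  - X ^ (k + 1)).comp (Polynomial.C (n : ℂ)⁻¹ * X)) := by
            rw [hDexp (k + 1) _ (ht k), Stmt15Aux.compexp ((n : ℂ))⁻¹ (k + 1) _ (ht k),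
              Finset.smul_sum]
            refine Finset.sum_congr rfl fun m hm => ?_
            rw [ih m (Finset.mem_range.1 hm), smul_smul, smul_smul, smul_smul]
            congr 1
            rw [div_eq_mul_inv, inv_pow]
            ring
          have hsplit : q (k + 1) = D ((X - Polynomial.C b) * ((X : ℂ[X]) - Polynomial.C 1) ^ k)
              - D ((X - Polynomial.C b) * ((X : ℂ[X]) - Polynomial.C 1) ^ k - X ^ (k + 1)) := by
            rw [map_sub]; simp [hq]
          rw [hsplit, e', et', ← smul_sub, ← sub_comp, sub_sub_cancel, X_pow_comp,
            mul_pow, ← C_pow, ← smul_eq_C_mul, smul_smul]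
          congr 1
          rw [div_eq_mul_inv, inv_pow]
    refine ⟨hr1, c, fun j => ?_⟩
    have hj := hmain j
    have hD' : D ((X : ℂ[X]) ^ j) = δ ((X : ℂ[X]) ^ j) + (X : ℂ[X]) ^ j := by simp [hD]
    rw [hq] at hj
    simp only at hj
    rw [hD'] at hj
    rw [eq_sub_iff_add_eq]
    exact hj
  · -- converse direction
    intro hrr ξ δ hδval
    set D : ℂ[X] →ₗ[ℂ] ℂ[X] := δ + LinearMap.id with hD
    have hDm : ∀ p : ℂ[X], D p = ξ • p.comp (Polynomial.C (n : ℂ)⁻¹ * X) := by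
      intro p
      rw [Stmt15Aux.Dexp D (p.natDegree + 1) p (Nat.lt_succ_self _),
        Stmt15Aux.compexp ((n : ℂ))⁻¹ (p.natDegree + 1) p (Nat.lt_succ_self _),
        Finset.smul_sum]
      refine Finset.sum_congr rfl fun m hm => ?_
      have hDX : D ((X : ℂ[X]) ^ m) = (ξ / (n : ℂ) ^ m) • (X : ℂ[X]) ^ m := by
        simp only [hD, LinearMap.add_apply, LinearMap.id_apply]
        rw [hδval m, sub_add_cancel]
      rw [hDX, smul_smul, smul_smul, smul_smul]
      congr 1
      rw [div_eq_mul_inv, inv_pow]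
      ring
    have hzp1 : ∀ i : ℤ, a ^ i * μ ^ (n * i) = μ ^ i := by
      intro i
      rw [hzp i, hrr, one_zpow, one_mul]
    have hLrel : ∀ (i : ℤ) (p : ℂ[X]), D ⁅L i, p⁆ = ⁅f (L i), D p⁆ := by
      intro i p
      rw [hbr i p, map_smul, hf.1 i, smul_lie, sub_lie, smul_lie, hactC, smul_zero,
        sub_zero, hbr (n * i), hDm p, hDm]
      push_cast
      have hu1 : (((X : ℂ[X]) - Polynomial.C ((i : ℂ) * b))).comp (Polynomial.C (n : ℂ)⁻¹ * X)
          = Polynomial.C (n : ℂ)⁻¹ * ((X : ℂ[X]) - Polynomial.C ((n : ℂ) * (i : ℂ) * b)) := by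
        rw [sub_comp, X_comp, C_comp, mul_sub, ← C_mul]
        congr 2
        field_simp
      have hu2 : (p.comp ((X : ℂ[X]) - Polynomial.C (i : ℂ))).comp (Polynomial.C (n : ℂ)⁻¹ * X)
          = p.comp (Polynomial.C (n : ℂ)⁻¹ * X - Polynomial.C (i : ℂ)) := by
        rw [Polynomial.comp_assoc, sub_comp, X_comp, C_comp]
      have hu3 : (p.comp (Polynomial.C (n : ℂ)⁻¹ * X)).comp ((X : ℂ[X]) - Polynomial.C ((n : ℂ) * (i : ℂ)))
          = p.comp (Polynomial.C (n : ℂ)⁻¹ * X - Polynomial.C (i : ℂ)) := by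
        rw [Polynomial.comp_assoc, mul_comp, C_comp, X_comp, mul_sub, ← C_mul]
        congr 3
        field_simp
      rw [mul_comp, hu1, hu2, smul_comp, hu3, mul_assoc, ← smul_eq_C_mul, mul_smul_comm,
        smul_smul, smul_smul, smul_smul, smul_smul]
      congr 1
      have hz := hzp1 i
      rw [div_eq_mul_inv]
      linear_combination (-((n : ℂ))⁻¹ * ξ) * hz
    -- now extend to all x by basis induction; first the basis cases give the full identity
    have hgoal : ∀ (x : V), ∀ p : ℂ[X],
        δ ⁅x, p⁆ = ⁅f x - x, p⁆ + ⁅x, δ p⁆ + ⁅f x - x, δ p⁆ := by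
      have hbase : ∀ (o : Option ℤ), ∀ p : ℂ[X],
          δ ⁅bb o, p⁆ = ⁅f (bb o) - bb o, p⁆ + ⁅bb o, δ p⁆ + ⁅f (bb o) - bb o, δ p⁆ := by
        intro o p
        match o with
        | none =>
          rw [hbC]
          have h1 : ∀ z : ℂ[X], ⁅f C - C, z⁆ = 0 := by
            intro z
            simp [hf.2, sub_lie, smul_lie, hactC]
          simp [hactC, h1]
        | some i =>
          rw [hbL i]
          refine (hiff δ (L i) p).2 ?_
          have h := hLrel i p
          simp only [hD, LinearMap.add_apply, LinearMap.id_apply] at h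
          exact h
      intro x
      have hx : x ∈ Submodule.span ℂ (Set.range bb) := by rw [bb.span_eq]; trivial
      refine Submodule.span_induction (p := fun x _ => ∀ p : ℂ[X],
          δ ⁅x, p⁆ = ⁅f x - x, p⁆ + ⁅x, δ p⁆ + ⁅f x - x, δ p⁆) ?_ ?_ ?_ ?_ hx
      · rintro y ⟨o, rfl⟩
        exact hbase o
      · intro p
        simp
      · intro y z _ _ hy hz p
        have h1 := hy p
        have h2 := hz p
        have e : f (y + z) - (y + z) = (f y - y) + (f z - z) := by
          rw [map_add]; abel
        rw [add_lie, map_add, e, add_lie, add_lie, add_lie]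
        linear_combination h1 + h2
      · intro t y _ hy p
        have h1 := hy p
        have e : f (t • y) - t • y = t • (f y - y) := by
          rw [map_smul, smul_sub]
        rw [smul_lie, map_smul, e, smul_lie, smul_lie, smul_lie]
        simp only [smul_eq_C_mul] at *
        linear_combination Polynomial.C t * h1
    exact hgoal
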